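/- Let A, S ⊆ [n] with A ∩ S ≠ ∅ and A \ S ≠ ∅. Then S is not separable with respect to the preference order induced by the voter basis vector v_A. Concretely, taking s ∈ S ∩ A, a ∈ A \ S, x_S = ∅, y_S = {s}, u = ∅, v = {a}: v_A(x_S ∪ u) > v_A(y_S ∪ u) while v_A(x_S ∪ v) < v_A(y_S ∪ v). -/

import Mathlib

/-- The voter basis vector `v_A`, as a utility function on outcomes. -/
def voter {n : ℕ} (A : Finset (Fin n)) (x : Finset (Fin n)) : ℚ :=
  if Even (x ∩ A).card then 1 else 0

theorem voter_not_separable_of_straddling (n : ℕ) (A S : Finset (Fin n))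
    (h1 : A ∩ S ≠ ∅) (h2 : A \ S ≠ ∅) :
    (¬ ∀ xS yS u v : Finset (Fin n), xS ⊆ S → yS ⊆ S → u ⊆ Sᶜ → v ⊆ Sᶜ →
        (voter A (xS ∪ u) ≥ voter A (yS ∪ u) ↔ voter A (xS ∪ v) ≥ voter A (yS ∪ v))) ∧
    ∀ s ∈ S ∩ A, ∀ a ∈ A \ S,
      voter A ((∅ : Finset (Fin n)) ∪ ∅) > voter A ({s} ∪ ∅) ∧
      voter A ((∅ : Finset (Fin n)) ∪ {a}) < voter A ({s} ∪ {a}) := by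
  have key : ∀ s ∈ S ∩ A, ∀ a ∈ A \ S,
      voter A ((∅ : Finset (Fin n)) ∪ ∅) > voter A ({s} ∪ ∅) ∧
      voter A ((∅ : Finset (Fin n)) ∪ {a}) < voter A ({s} ∪ {a}) := by
    intro s hs a ha
    simp only [Finset.mem_inter] at hs
    simp only [Finset.mem_sdiff] at ha
    have hsa : s ≠ a := fun h => ha.2 (h ▸ hs.1)
    have e1 : ({s} : Finset (Fin n)) ∩ A = {s} := by
      rw [Finset.inter_eq_left]; simpa using hs.2
    have e2 : ({a} : Finset (Fin n)) ∩ A = {a} := by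
      rw [Finset.inter_eq_left]; simpa using ha.1
    have e3 : ({s} ∪ {a} : Finset (Fin n)) ∩ A = {s} ∪ {a} := by
      rw [Finset.inter_eq_left]
      intro x hx
      rcases Finset.mem_union.mp hx with h | h <;> simp_all
    constructor
    · simp [voter, e1]
    · have hcard : ({s} ∪ {a} : Finset (Fin n)).card = 2 := by
        rw [Finset.union_comm, ← Finset.insert_eq]
        rw [Finset.card_insert_of_notMem (by simpa using hsa.symm)]
        simp
      simp only [voter, Finset.empty_union, e2, e3, hcard]
      simp
  refine ⟨?_, key⟩
  intro hsep
  obtain ⟨s, hs⟩ := Finset.nonempty_iff_ne_empty.mpr h1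
  obtain ⟨a, ha⟩ := Finset.nonempty_iff_ne_empty.mpr h2
  rw [Finset.inter_comm] at hs
  obtain ⟨g1, g2⟩ := key s hs a ha
  have hsub : ({s} : Finset (Fin n)) ⊆ S := by
    simp only [Finset.mem_inter] at hs; simpa using hs.1
  have hasub : ({a} : Finset (Fin n)) ⊆ Sᶜ := by
    simp only [Finset.mem_sdiff] at ha
    simp [Finset.subset_iff, ha.2]
  have := hsep ∅ {s} ∅ {a} (Finset.empty_subset _) hsub (Finset.empty_subset _) hasub
  have h1' : voter A ((∅:Finset (Fin n)) ∪ ∅) ≥ voter A ({s} ∪ ∅) := le_of_lt g1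
  have := this.mp h1'
  linarith
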